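/- The Boole–Weyl algebra BW_n, defined as the free associative Z_2-algebra on x_1,...,x_n, y_1,...,y_n modulo the relations x_i² = x_i, y_i² = 0, y_i x_i = x_i y_i + y_i + 1, x_i x_j = x_j x_i, y_i y_j = y_j y_i, and y_i x_j = x_j y_i for i ≠ j, is isomorphic as a Z_2-algebra to End_{Z_2}(M(Z_2^n, Z_2)), via sending x_i to multiplication by the i-th coordinate and y_i to the Boolean derivative ∂_i. -/

import Mathlib

open Finset

/-- The space of all functions `Z_2^n → Z_2`. -/
abbrev V (n : ℕ) : Type := (Fin n → ZMod 2) → ZMod 2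

/-- Indicator vector of a subset of `[n]`, identifying `P[n]` with `Z_2^n`. -/
def ind {n : ℕ} (a : Finset (Fin n)) : Fin n → ZMod 2 :=
  fun i => if i ∈ a then 1 else 0

/-- `m^a`: the indicator function of the single point `a`. -/
def mFun {n : ℕ} (a : Finset (Fin n)) : V n :=
  fun b => if b = ind a then 1 else 0

/-- `x^a`: the monomial function, `x^a(b) = 1` iff `a ⊆ b`. -/
def xFun {n : ℕ} (a : Finset (Fin n)) : V n :=
  fun b => if ∀ i ∈ a, b i = 1 then 1 else 0

/-- `w^a = ∏_{i ∈ a} (x_i + 1)`: `w^a(b) = 1` iff `b ⊆ [n] \ a`. -/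
def wFun {n : ℕ} (a : Finset (Fin n)) : V n :=
  fun b => if ∀ i ∈ a, b i = 0 then 1 else 0

/-- The shift operator `s_i`, `(s_i f)(x) = f(x + e_i)`. -/
def shiftOp {n : ℕ} (i : Fin n) : Module.End (ZMod 2) (V n) where
  toFun f := fun x => f (x + Pi.single i 1)
  map_add' f g := rfl
  map_smul' c f := by funext x; rfl

/-- The Boolean partial derivative `∂_i`, `(∂_i f)(x) = f(x + e_i) + f(x)`. -/
def derivOp {n : ℕ} (i : Fin n) : Module.End (ZMod 2) (V n) where
  toFun f := fun x => f (x + Pi.single i 1) + f x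
  map_add' f g := by
    funext x
    show (f + g) _ + (f + g) _ = _
    simp only [Pi.add_apply]
    ring
  map_smul' c f := by
    funext x
    show (c • f) _ + (c • f) _ = _
    simp only [Pi.smul_apply, RingHom.id_apply, smul_eq_mul]
    ring

lemma derivOp_eq_shiftOp_add_one {n : ℕ} (i : Fin n) :
    derivOp (n := n) i = shiftOp i + 1 :=
  LinearMap.ext fun _ => rfl

lemma shiftOp_comm {n : ℕ} (i j : Fin n) : Commute (shiftOp i) (shiftOp (n := n) j) := by
  apply LinearMap.ext; intro f; funext x
  show f (x + Pi.single i 1 + Pi.single j 1) = f (x + Pi.single j 1 + Pi.single i 1)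
  rw [add_right_comm]

lemma derivOp_comm {n : ℕ} (i j : Fin n) : Commute (derivOp i) (derivOp (n := n) j) := by
  rw [derivOp_eq_shiftOp_add_one, derivOp_eq_shiftOp_add_one]
  exact ((shiftOp_comm i j).add_right (Commute.one_right _)).add_left
    ((Commute.one_left _).add_right (Commute.one_right _))

/-- `∂^b = ∏_{i ∈ b} ∂_i`. -/
def derivPow {n : ℕ} (b : Finset (Fin n)) : Module.End (ZMod 2) (V n) :=
  b.noncommProd derivOp (fun i _ j _ _ => derivOp_comm i j)

/-- `s^b = ∏_{i ∈ b} s_i`. -/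
def shiftPow {n : ℕ} (b : Finset (Fin n)) : Module.End (ZMod 2) (V n) :=
  b.noncommProd shiftOp (fun i _ j _ _ => shiftOp_comm i j)

/-- The operator of multiplication by a function `g`. -/
noncomputable def mulOp {n : ℕ} (g : V n) : Module.End (ZMod 2) (V n) :=
  LinearMap.mulLeft (ZMod 2) g

/-- `X_i`: multiplication by the `i`-th coordinate function. -/
noncomputable def XOp {n : ℕ} (i : Fin n) : Module.End (ZMod 2) (V n) :=
  mulOp (fun x => x i)

/-- Generator `x_i` of the Boole–Weyl algebra presentation. -/
noncomputable def xg (n : ℕ) (i : Fin n) : FreeAlgebra (ZMod 2) (Fin n ⊕ Fin n) :=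
  FreeAlgebra.ι (ZMod 2) (Sum.inl i)

/-- Generator `y_i` of the Boole–Weyl algebra presentation. -/
noncomputable def yg (n : ℕ) (i : Fin n) : FreeAlgebra (ZMod 2) (Fin n ⊕ Fin n) :=
  FreeAlgebra.ι (ZMod 2) (Sum.inr i)

/-- The defining relations of the Boole–Weyl algebra `BW_n`. -/
inductive BWRel (n : ℕ) :
    FreeAlgebra (ZMod 2) (Fin n ⊕ Fin n) → FreeAlgebra (ZMod 2) (Fin n ⊕ Fin n) → Prop
  | xsq (i : Fin n) : BWRel n (xg n i * xg n i) (xg n i)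
  | ysq (i : Fin n) : BWRel n (yg n i * yg n i) 0
  | yx (i : Fin n) : BWRel n (yg n i * xg n i) (xg n i * yg n i + yg n i + 1)
  | xx (i j : Fin n) : BWRel n (xg n i * xg n j) (xg n j * xg n i)
  | yy (i j : Fin n) : BWRel n (yg n i * yg n j) (yg n j * yg n i)
  | yxij (i j : Fin n) (h : i ≠ j) : BWRel n (yg n i * xg n j) (xg n j * yg n i)

-- auxiliary lemmas

lemma z2_sq (z : ZMod 2) : z * z = z := by revert z; decide
lemma z2_add_self (z : ZMod 2) : z + z = 0 := by revert z; decide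
lemma z2_cases (z : ZMod 2) : z = 0 ∨ z = 1 := by revert z; decide

lemma single_add_single {n : ℕ} (i : Fin n) :
    (Pi.single i 1 : Fin n → ZMod 2) + Pi.single i 1 = 0 := by
  funext j; exact z2_add_self _

lemma XOp_apply {n : ℕ} (i : Fin n) (f : V n) (x : Fin n → ZMod 2) :
    XOp i f x = x i * f x := rfl

lemma derivOp_apply {n : ℕ} (i : Fin n) (f : V n) (x : Fin n → ZMod 2) :
    derivOp i f x = f (x + Pi.single i 1) + f x := rfl

lemma XOp_sq {n : ℕ} (i : Fin n) : XOp (n := n) i * XOp i = XOp i := by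
  apply LinearMap.ext; intro f; funext x
  show x i * (x i * f x) = x i * f x
  rw [← mul_assoc, z2_sq]

lemma derivOp_sq {n : ℕ} (i : Fin n) : derivOp (n := n) i * derivOp i = 0 := by
  apply LinearMap.ext; intro f; funext x
  show (f (x + Pi.single i 1 + Pi.single i 1) + f (x + Pi.single i 1)) + (f (x + Pi.single i 1) + f x) = 0
  rw [add_assoc x, single_add_single, add_zero]
  ring_nf
  have h : (2 : ZMod 2) = 0 := rfl
  rw [h, mul_zero, mul_zero, add_zero]

lemma apply_add_single {n : ℕ} (i : Fin n) (x : Fin n → ZMod 2) :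
    ((x + Pi.single i 1 : Fin n → ZMod 2)) i = x i + 1 := by simp

lemma apply_add_single_ne {n : ℕ} {i j : Fin n} (h : j ≠ i) (x : Fin n → ZMod 2) :
    ((x + Pi.single i 1 : Fin n → ZMod 2)) j = x j := by simp [Pi.single_apply, h]

lemma derivOp_XOp {n : ℕ} (i : Fin n) :
    derivOp (n := n) i * XOp i = XOp i * derivOp i + derivOp i + 1 := by
  apply LinearMap.ext; intro f; funext x
  show ((x + Pi.single i 1 : Fin n → ZMod 2)) i * f (x + Pi.single i 1) + x i * f x
    = (x i * (f (x + Pi.single i 1) + f x) + (f (x + Pi.single i 1) + f x)) + f x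
  rw [apply_add_single]
  ring_nf
  have h : (2 : ZMod 2) = 0 := rfl
  rw [h, mul_zero, add_zero]

lemma XOp_comm {n : ℕ} (i j : Fin n) : XOp (n := n) i * XOp j = XOp j * XOp i := by
  apply LinearMap.ext; intro f; funext x
  show x i * (x j * f x) = x j * (x i * f x)
  ring

lemma derivOp_XOp_ne {n : ℕ} {i j : Fin n} (h : i ≠ j) :
    derivOp (n := n) i * XOp j = XOp j * derivOp i := by
  apply LinearMap.ext; intro f; funext x
  show ((x + Pi.single i 1 : Fin n → ZMod 2)) j * f (x + Pi.single i 1) + x j * f x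
    = x j * (f (x + Pi.single i 1) + f x)
  rw [apply_add_single_ne (Ne.symm h)]
  ring

noncomputable def phiFree (n : ℕ) :
    FreeAlgebra (ZMod 2) (Fin n ⊕ Fin n) →ₐ[ZMod 2] Module.End (ZMod 2) (V n) :=
  FreeAlgebra.lift (ZMod 2) (Sum.elim XOp derivOp)

lemma phiFree_x {n : ℕ} (i : Fin n) : phiFree n (xg n i) = XOp i := by
  simp [phiFree, xg]

lemma phiFree_y {n : ℕ} (i : Fin n) : phiFree n (yg n i) = derivOp i := by
  simp [phiFree, yg]

lemma phiFree_rel {n : ℕ} {a b : FreeAlgebra (ZMod 2) (Fin n ⊕ Fin n)}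
    (h : BWRel n a b) : phiFree n a = phiFree n b := by
  cases h with
  | xsq i => rw [map_mul, phiFree_x, XOp_sq]
  | ysq i => rw [map_mul, phiFree_y, map_zero, derivOp_sq]
  | yx i => rw [map_mul, map_add, map_add, map_mul, map_one, phiFree_x, phiFree_y, derivOp_XOp]
  | xx i j => rw [map_mul, map_mul, phiFree_x, phiFree_x, XOp_comm]
  | yy i j => rw [map_mul, map_mul, phiFree_y, phiFree_y]; exact derivOp_comm i j
  | yxij i j hij => rw [map_mul, map_mul, phiFree_x, phiFree_y, derivOp_XOp_ne hij]

noncomputable def phi (n : ℕ) :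
    RingQuot (BWRel n) →ₐ[ZMod 2] Module.End (ZMod 2) (V n) :=
  RingQuot.liftAlgHom (ZMod 2) ⟨phiFree n, fun _ _ h => phiFree_rel h⟩

lemma phi_x {n : ℕ} (i : Fin n) :
    phi n (RingQuot.mkAlgHom (ZMod 2) (BWRel n) (xg n i)) = XOp i := by
  rw [phi, RingQuot.liftAlgHom_mkAlgHom_apply, phiFree_x]

lemma phi_y {n : ℕ} (i : Fin n) :
    phi n (RingQuot.mkAlgHom (ZMod 2) (BWRel n) (yg n i)) = derivOp i := by
  rw [phi, RingQuot.liftAlgHom_mkAlgHom_apply, phiFree_y]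

def invInd {n : ℕ} (x : Fin n → ZMod 2) : Finset (Fin n) :=
  Finset.univ.filter (fun i => x i = 1)

lemma ind_invInd {n : ℕ} (x : Fin n → ZMod 2) : ind (invInd x) = x := by
  funext i
  simp only [ind, invInd, Finset.mem_filter, Finset.mem_univ, true_and]
  rcases z2_cases (x i) with h | h <;> simp [h]

lemma ind_injective {n : ℕ} : Function.Injective (ind (n := n)) := by
  intro a b h; ext i
  have hi := congrFun h i
  simp only [ind] at hi
  by_cases ha : i ∈ a <;> by_cases hb : i ∈ b <;>
    simp only [ha, hb, if_true, if_false] at hi ⊢ <;>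
    first
      | exact iff_of_true ha hb
      | exact iff_of_false ha hb
      | exact absurd hi (by decide)

lemma ind_symmDiff {n : ℕ} (a b : Finset (Fin n)) :
    ind (symmDiff a b) = ind a + ind b := by
  funext i
  simp only [ind, Pi.add_apply, Finset.mem_symmDiff]
  by_cases ha : i ∈ a <;> by_cases hb : i ∈ b <;> simp [ha, hb] <;> decide

lemma ind_empty {n : ℕ} : ind (∅ : Finset (Fin n)) = 0 := by
  funext i; simp [ind]

lemma ind_insert {n : ℕ} {i : Fin n} {c : Finset (Fin n)} (h : i ∉ c) :
    ind (insert i c) = Pi.single i 1 + ind c := by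
  funext j
  simp only [ind, Pi.add_apply, Finset.mem_insert, Pi.single_apply]
  by_cases hj : j = i
  · subst hj; simp [h]
  · simp [hj, fun hh : j ∈ c => hj]

lemma shiftPow_apply {n : ℕ} (c : Finset (Fin n)) (f : V n) (x : Fin n → ZMod 2) :
    shiftPow c f x = f (x + ind c) := by
  induction c using Finset.induction_on generalizing x with
  | empty =>
    rw [shiftPow, ind_empty, add_zero]
    rfl
  | @insert i c hic ih =>
    rw [show shiftPow (insert i c) = shiftOp i * shiftPow c from
      Finset.noncommProd_insert_of_notMem _ _ _ _ hic]
    show (shiftPow c f) (x + Pi.single i 1) = f (x + ind (insert i c))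
    rw [ih, ind_insert hic, add_assoc]

lemma mulOp_one {n : ℕ} : mulOp (1 : V n) = 1 :=
  LinearMap.ext fun f => one_mul f

lemma mulOp_mul {n : ℕ} (g h : V n) : mulOp (g * h) = mulOp g * mulOp h :=
  LinearMap.ext fun f => mul_assoc g h f

def coordFun {n : ℕ} (i : Fin n) : V n := fun x => x i

lemma mFun_eq_prod {n : ℕ} (a : Finset (Fin n)) :
    mFun a = (∏ i ∈ a, coordFun i) * ∏ i ∈ aᶜ, (1 + coordFun i) := by
  funext b
  rw [Pi.mul_apply, Finset.prod_apply, Finset.prod_apply]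
  by_cases hb : b = ind a
  · subst hb
    have h1 : ∏ i ∈ a, coordFun i (ind a) = 1 :=
      Finset.prod_eq_one fun i hi => by simp [coordFun, ind, hi]
    have h2 : ∏ i ∈ aᶜ, (1 + coordFun i) (ind a) = 1 :=
      Finset.prod_eq_one fun i hi => by
        simp [Pi.add_apply, coordFun, ind, Finset.mem_compl.mp hi]
    rw [h1, h2, mul_one]
    simp [mFun]
  · have h0 : mFun a b = 0 := by simp only [mFun]; rw [if_neg hb]
    rw [h0]
    obtain ⟨j, hj⟩ := Function.ne_iff.mp hb
    by_cases hja : j ∈ a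
    · have hbj : coordFun j b = 0 := by
        rcases z2_cases (b j) with h | h
        · exact h
        · exact absurd (h.trans (by simp [ind, hja] : (1 : ZMod 2) = ind a j)) hj
      rw [Finset.prod_eq_zero (f := fun c => coordFun c b) hja hbj, zero_mul]
    · have hbj : b j = 1 := by
        rcases z2_cases (b j) with h | h
        · exact absurd (h.trans (by simp [ind, hja] : (0 : ZMod 2) = ind a j)) hj
        · exact h
      have hz : (1 + coordFun j) b = 0 := by
        show (1 : ZMod 2) + b j = 0
        rw [hbj]; decide
      rw [Finset.prod_eq_zero (f := fun c => (1 + coordFun c) b) (Finset.mem_compl.mpr hja) hz, mul_zero]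

noncomputable def Eunit {n : ℕ} (a d : Finset (Fin n)) : Module.End (ZMod 2) (V n) :=
  mulOp (mFun a) * shiftPow (symmDiff d a)

lemma Eunit_apply {n : ℕ} (a d : Finset (Fin n)) (f : V n) (x : Fin n → ZMod 2) :
    Eunit a d f x = mFun a x * f (x + (ind d + ind a)) := by
  show mFun a x * (shiftPow (symmDiff d a) f) x = _
  rw [shiftPow_apply, ind_symmDiff]

lemma shiftOp_eq {n : ℕ} (i : Fin n) : shiftOp (n := n) i = derivOp i + 1 := by
  apply LinearMap.ext; intro f; funext x
  show f (x + Pi.single i 1) = (f (x + Pi.single i 1) + f x) + f x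
  rw [add_assoc, z2_add_self, add_zero]

lemma XOp_mem {n : ℕ} (i : Fin n) : XOp i ∈ (phi n).range := ⟨_, phi_x i⟩

lemma shiftOp_mem {n : ℕ} (i : Fin n) : shiftOp i ∈ (phi n).range := by
  rw [shiftOp_eq]
  exact add_mem ⟨_, phi_y i⟩ (one_mem _)

lemma shiftPow_mem {n : ℕ} (c : Finset (Fin n)) : shiftPow c ∈ (phi n).range := by
  induction c using Finset.induction_on with
  | empty => rw [shiftPow]; exact one_mem _
  | @insert i c hic ih =>
    rw [show shiftPow (insert i c) = shiftOp i * shiftPow c from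
      Finset.noncommProd_insert_of_notMem _ _ _ _ hic]
    exact mul_mem (shiftOp_mem i) ih

lemma mulOp_prod_mem {n : ℕ} (s : Finset (Fin n)) (g : Fin n → V n)
    (hg : ∀ i, mulOp (g i) ∈ (phi n).range) :
    mulOp (∏ i ∈ s, g i) ∈ (phi n).range := by
  induction s using Finset.induction_on with
  | empty => rw [Finset.prod_empty, mulOp_one]; exact one_mem _
  | @insert i s hi ih => rw [Finset.prod_insert hi, mulOp_mul]; exact mul_mem (hg i) ih

lemma mulOp_mFun_mem {n : ℕ} (a : Finset (Fin n)) : mulOp (mFun a) ∈ (phi n).range := by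
  rw [mFun_eq_prod, mulOp_mul]
  refine mul_mem (mulOp_prod_mem _ _ fun i => XOp_mem i) (mulOp_prod_mem _ _ fun i => ?_)
  have h : mulOp (1 + coordFun i) = 1 + XOp i := by
    apply LinearMap.ext; intro f; funext x
    show (1 + coordFun i) x * f x = f x + x i * f x
    rw [Pi.add_apply, Pi.one_apply]
    show (1 + x i) * f x = _
    ring
  rw [h]; exact add_mem (one_mem _) (XOp_mem i)

lemma Eunit_mem {n : ℕ} (a d : Finset (Fin n)) : Eunit a d ∈ (phi n).range :=
  mul_mem (mulOp_mFun_mem a) (shiftPow_mem _)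

lemma fun_eq_sum {n : ℕ} (f : V n) :
    f = ∑ d : Finset (Fin n), f (ind d) • mFun d := by
  funext y
  rw [Finset.sum_apply]
  rw [Finset.sum_eq_single (invInd y)]
  · simp [mFun, ind_invInd]
  · intro d _ hd
    have h0 : mFun d y = 0 := by
      simp only [mFun]
      rw [if_neg]
      intro h
      exact hd (ind_injective (by rw [← h, ind_invInd])).symm
    rw [Pi.smul_apply, h0, smul_zero]
  · intro h; exact absurd (Finset.mem_univ _) h

lemma x_add_x {n : ℕ} (x : Fin n → ZMod 2) : x + x = 0 := by
  funext i; exact z2_add_self _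

lemma sum_repr {n : ℕ} (F : Module.End (ZMod 2) (V n)) :
    F = ∑ p : Finset (Fin n) × Finset (Fin n),
      F (mFun p.2) (ind p.1) • Eunit p.1 p.2 := by
  apply LinearMap.ext; intro f; funext x
  have hx : ind (invInd x) = x := ind_invInd x
  have hm : mFun (invInd x) x = 1 := by simp [mFun, hx]
  rw [LinearMap.sum_apply, Finset.sum_apply, Fintype.sum_prod_type,
      Finset.sum_eq_single (invInd x)]
  · have lhs : F f x = ∑ d : Finset (Fin n), f (ind d) * F (mFun d) x := by
      conv_lhs => rw [fun_eq_sum f]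
      rw [map_sum, Finset.sum_apply]
      simp only [map_smul, Pi.smul_apply, smul_eq_mul]
    rw [lhs]
    refine Finset.sum_congr rfl fun d _ => ?_
    simp only [LinearMap.smul_apply, Pi.smul_apply, smul_eq_mul]
    rw [Eunit_apply, hx, hm, one_mul]
    rw [show x + (ind d + x) = ind d by
      rw [add_comm (ind d) x, ← add_assoc, x_add_x, zero_add]]
    exact mul_comm _ _
  · intro a _ ha
    refine Finset.sum_eq_zero fun d _ => ?_
    simp only [LinearMap.smul_apply, Pi.smul_apply, smul_eq_mul]
    rw [Eunit_apply]
    have h0 : mFun a x = 0 := by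
      simp only [mFun]
      rw [if_neg]
      intro h
      exact ha (ind_injective (by rw [← h, ind_invInd])).symm
    rw [h0, zero_mul, mul_zero]
  · intro h; exact absurd (Finset.mem_univ _) h

lemma phi_surjective (n : ℕ) : Function.Surjective (phi n) := by
  intro F
  have hF : F ∈ (phi n).range := by
    rw [sum_repr F]
    exact Subalgebra.sum_mem _ fun p _ =>
      Subalgebra.smul_mem _ (Eunit_mem p.1 p.2) _
  exact hF

noncomputable def Xq (n : ℕ) (i : Fin n) : RingQuot (BWRel n) :=
  RingQuot.mkAlgHom (ZMod 2) (BWRel n) (xg n i)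

noncomputable def Yq (n : ℕ) (i : Fin n) : RingQuot (BWRel n) :=
  RingQuot.mkAlgHom (ZMod 2) (BWRel n) (yg n i)

lemma Xq_comm {n : ℕ} (i j : Fin n) : Commute (Xq n i) (Xq n j) := by
  show Xq n i * Xq n j = Xq n j * Xq n i
  simpa only [Xq, map_mul] using RingQuot.mkAlgHom_rel (ZMod 2) (BWRel.xx i j)

lemma Yq_comm {n : ℕ} (i j : Fin n) : Commute (Yq n i) (Yq n j) := by
  show Yq n i * Yq n j = Yq n j * Yq n i
  simpa only [Yq, map_mul] using RingQuot.mkAlgHom_rel (ZMod 2) (BWRel.yy i j)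

lemma Xq_sq {n : ℕ} (i : Fin n) : Xq n i * Xq n i = Xq n i := by
  simpa only [Xq, map_mul] using RingQuot.mkAlgHom_rel (ZMod 2) (BWRel.xsq i)

lemma Yq_sq {n : ℕ} (i : Fin n) : Yq n i * Yq n i = 0 := by
  simpa only [Yq, map_mul, map_zero] using RingQuot.mkAlgHom_rel (ZMod 2) (BWRel.ysq i)

lemma Yq_Xq {n : ℕ} (i : Fin n) :
    Yq n i * Xq n i = Xq n i * Yq n i + Yq n i + 1 := by
  simpa only [Xq, Yq, map_mul, map_add, map_one] using
    RingQuot.mkAlgHom_rel (ZMod 2) (BWRel.yx i)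

lemma Yq_Xq_ne {n : ℕ} {i j : Fin n} (h : i ≠ j) :
    Yq n i * Xq n j = Xq n j * Yq n i := by
  simpa only [Xq, Yq, map_mul] using RingQuot.mkAlgHom_rel (ZMod 2) (BWRel.yxij i j h)

noncomputable def XqMon (n : ℕ) (a : Finset (Fin n)) : RingQuot (BWRel n) :=
  a.noncommProd (Xq n) (fun i _ j _ _ => Xq_comm i j)

noncomputable def YqMon (n : ℕ) (b : Finset (Fin n)) : RingQuot (BWRel n) :=
  b.noncommProd (Yq n) (fun i _ j _ _ => Yq_comm i j)

lemma XqMon_empty (n : ℕ) : XqMon n ∅ = 1 := Finset.noncommProd_empty _ _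

lemma YqMon_empty (n : ℕ) : YqMon n ∅ = 1 := Finset.noncommProd_empty _ _

lemma XqMon_insert {n : ℕ} {i : Fin n} {a : Finset (Fin n)} (h : i ∉ a) :
    XqMon n (insert i a) = Xq n i * XqMon n a :=
  Finset.noncommProd_insert_of_notMem _ _ _ _ h

lemma YqMon_insert {n : ℕ} {i : Fin n} {b : Finset (Fin n)} (h : i ∉ b) :
    YqMon n (insert i b) = Yq n i * YqMon n b :=
  Finset.noncommProd_insert_of_notMem _ _ _ _ h

lemma Xq_mul_XqMon {n : ℕ} (i : Fin n) (a : Finset (Fin n)) :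
    Xq n i * XqMon n a = XqMon n (insert i a) := by
  by_cases h : i ∈ a
  · rw [Finset.insert_eq_self.mpr h]
    conv_lhs => rw [← Finset.insert_erase h]
    conv_rhs => rw [← Finset.insert_erase h]
    rw [XqMon_insert (Finset.notMem_erase i a), ← mul_assoc, Xq_sq]
  · rw [XqMon_insert h]

lemma Yq_mul_YqMon {n : ℕ} (i : Fin n) (b : Finset (Fin n)) :
    Yq n i * YqMon n b = if i ∈ b then 0 else YqMon n (insert i b) := by
  by_cases h : i ∈ b
  · rw [if_pos h]
    conv_lhs => rw [← Finset.insert_erase h]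
    rw [YqMon_insert (Finset.notMem_erase i b), ← mul_assoc, Yq_sq, zero_mul]
  · rw [if_neg h, YqMon_insert h]

lemma Yq_mul_XqMon_not_mem {n : ℕ} {i : Fin n} {a : Finset (Fin n)} (h : i ∉ a) :
    Yq n i * XqMon n a = XqMon n a * Yq n i := by
  refine (Finset.noncommProd_commute a (Xq n) (fun i _ j _ _ => Xq_comm i j) (Yq n i)
    (fun j hj => ?_)).eq
  exact Yq_Xq_ne (fun hij => h (hij ▸ hj))

lemma Yq_mul_XqMon_mem {n : ℕ} {i : Fin n} {e : Finset (Fin n)} (h : i ∉ e) :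
    Yq n i * XqMon n (insert i e) =
      XqMon n (insert i e) * Yq n i + XqMon n e * Yq n i + XqMon n e := by
  rw [XqMon_insert h, ← mul_assoc, Yq_Xq, add_mul, add_mul, one_mul, mul_assoc,
    Yq_mul_XqMon_not_mem h, ← mul_assoc]

noncomputable def Mon (n : ℕ) (p : Finset (Fin n) × Finset (Fin n)) : RingQuot (BWRel n) :=
  XqMon n p.1 * YqMon n p.2

noncomputable def Msub (n : ℕ) : Submodule (ZMod 2) (RingQuot (BWRel n)) :=
  Submodule.span (ZMod 2) (Set.range (Mon n))

lemma one_mem_Msub (n : ℕ) : (1 : RingQuot (BWRel n)) ∈ Msub n := by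
  have h : Mon n (∅, ∅) = 1 := by
    rw [Mon, XqMon_empty, YqMon_empty, one_mul]
  exact Submodule.subset_span ⟨(∅, ∅), h⟩

lemma XqMon_mul_Yq_YqMon_mem {n : ℕ} (a b : Finset (Fin n)) (i : Fin n) :
    XqMon n a * (Yq n i * YqMon n b) ∈ Msub n := by
  rw [Yq_mul_YqMon]
  by_cases h : i ∈ b
  · rw [if_pos h, mul_zero]; exact zero_mem _
  · rw [if_neg h]; exact Submodule.subset_span ⟨(a, insert i b), rfl⟩

lemma Xq_mul_Mon_mem {n : ℕ} (i : Fin n) (p : Finset (Fin n) × Finset (Fin n)) :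
    Xq n i * Mon n p ∈ Msub n := by
  rw [Mon, ← mul_assoc, Xq_mul_XqMon]
  exact Submodule.subset_span ⟨(insert i p.1, p.2), rfl⟩

lemma Yq_mul_Mon_mem {n : ℕ} (i : Fin n) (p : Finset (Fin n) × Finset (Fin n)) :
    Yq n i * Mon n p ∈ Msub n := by
  obtain ⟨a, b⟩ := p
  show Yq n i * (XqMon n a * YqMon n b) ∈ Msub n
  by_cases h : i ∈ a
  · rw [← Finset.insert_erase h, ← mul_assoc,
      Yq_mul_XqMon_mem (Finset.notMem_erase i a), add_mul, add_mul,
      mul_assoc, mul_assoc]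
    refine add_mem (add_mem (XqMon_mul_Yq_YqMon_mem _ _ _) (XqMon_mul_Yq_YqMon_mem _ _ _)) ?_
    exact Submodule.subset_span ⟨(a.erase i, b), rfl⟩
  · rw [← mul_assoc, Yq_mul_XqMon_not_mem h, mul_assoc]
    exact XqMon_mul_Yq_YqMon_mem _ _ _

def Ssub (n : ℕ) : Subalgebra (ZMod 2) (RingQuot (BWRel n)) where
  carrier := {z | ∀ m ∈ Msub n, z * m ∈ Msub n}
  mul_mem' := fun {z} {w} hz hw m hm => by rw [mul_assoc]; exact hz _ (hw _ hm)
  add_mem' := fun {z} {w} hz hw m hm => by rw [add_mul]; exact add_mem (hz _ hm) (hw _ hm)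
  algebraMap_mem' := fun r m hm => by
    rw [← Algebra.smul_def]
    exact Submodule.smul_mem _ _ hm

lemma gen_mem_Ssub {n : ℕ} (s : Fin n ⊕ Fin n) :
    RingQuot.mkAlgHom (ZMod 2) (BWRel n) (FreeAlgebra.ι (ZMod 2) s) ∈ Ssub n := by
  cases s with
  | inl i =>
    intro m hm
    refine Submodule.span_induction (fun x hx => ?_) (by rw [mul_zero]; exact zero_mem _)
      (fun x y hx hy h1 h2 => by rw [mul_add]; exact add_mem h1 h2)
      (fun c x hx h1 => by rw [mul_smul_comm]; exact Submodule.smul_mem _ _ h1) hm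
    obtain ⟨p, rfl⟩ := hx
    exact Xq_mul_Mon_mem i p
  | inr i =>
    intro m hm
    refine Submodule.span_induction (fun x hx => ?_) (by rw [mul_zero]; exact zero_mem _)
      (fun x y hx hy h1 h2 => by rw [mul_add]; exact add_mem h1 h2)
      (fun c x hx h1 => by rw [mul_smul_comm]; exact Submodule.smul_mem _ _ h1) hm
    obtain ⟨p, rfl⟩ := hx
    exact Yq_mul_Mon_mem i p

lemma Msub_top (n : ℕ) : Msub n = ⊤ := by
  have h1 : Algebra.adjoin (ZMod 2)
      (Set.range fun s => RingQuot.mkAlgHom (ZMod 2) (BWRel n) (FreeAlgebra.ι (ZMod 2) s)) = ⊤ := by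
    rw [show (Set.range fun s => RingQuot.mkAlgHom (ZMod 2) (BWRel n) (FreeAlgebra.ι (ZMod 2) s))
        = RingQuot.mkAlgHom (ZMod 2) (BWRel n) '' Set.range (FreeAlgebra.ι (ZMod 2)) by
      rw [← Set.range_comp]; rfl]
    rw [← AlgHom.map_adjoin, FreeAlgebra.adjoin_range_ι, Algebra.map_top]
    exact (AlgHom.range_eq_top _).mpr (RingQuot.mkAlgHom_surjective _ _)
  rw [Submodule.eq_top_iff']
  intro z
  have hz : z ∈ Ssub n := by
    have hle : Algebra.adjoin (ZMod 2)
        (Set.range fun s => RingQuot.mkAlgHom (ZMod 2) (BWRel n) (FreeAlgebra.ι (ZMod 2) s))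
        ≤ Ssub n :=
      Algebra.adjoin_le (Set.range_subset_iff.mpr gen_mem_Ssub)
    rw [h1] at hle
    exact hle trivial
  simpa using hz 1 (one_mem_Msub n)

lemma phi_injective (n : ℕ) : Function.Injective (phi n) := by
  have hspan : Submodule.span (ZMod 2) (Set.range (Mon n)) = ⊤ := Msub_top n
  have hfin : Module.Finite (ZMod 2) (RingQuot (BWRel n)) :=
    ⟨hspan ▸ Submodule.fg_span (Set.finite_range _)⟩
  classical
  have h2 : Module.finrank (ZMod 2) (RingQuot (BWRel n))
      ≤ Fintype.card (Finset (Fin n) × Finset (Fin n)) := by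
    calc Module.finrank (ZMod 2) (RingQuot (BWRel n))
        = Module.finrank (ZMod 2) (⊤ : Submodule (ZMod 2) (RingQuot (BWRel n))) :=
          (finrank_top _ _).symm
      _ = Module.finrank (ZMod 2) (Submodule.span (ZMod 2) (Set.range (Mon n))) := by
          rw [hspan]
      _ ≤ (Set.range (Mon n)).toFinset.card := finrank_span_le_card _
      _ ≤ Fintype.card (Finset (Fin n) × Finset (Fin n)) := by
          rw [Set.toFinset_range]
          exact (Finset.card_image_le).trans (by simp)
  have h3 : Module.finrank (ZMod 2) (Module.End (ZMod 2) (V n))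
      = Fintype.card (Finset (Fin n) × Finset (Fin n)) := by
    show Module.finrank (ZMod 2) (V n →ₗ[ZMod 2] V n) = _
    rw [Module.finrank_linearMap, Module.finrank_fintype_fun_eq_card]
    simp [Fintype.card_finset]
  have h4 := LinearMap.finrank_range_add_finrank_ker (phi n).toLinearMap
  have hrange : LinearMap.range (phi n).toLinearMap = ⊤ :=
    LinearMap.range_eq_top.mpr (phi_surjective n)
  rw [hrange, finrank_top] at h4
  have hker : Module.finrank (ZMod 2) (LinearMap.ker (phi n).toLinearMap) = 0 := by omega
  have hbot : LinearMap.ker (phi n).toLinearMap = ⊥ := Submodule.finrank_eq_zero.mp hker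
  exact LinearMap.ker_eq_bot.mp hbot

/-- The Boole–Weyl algebra `BW_n = Z_2⟨x_i, y_i⟩/(relations)` is isomorphic as a
`Z_2`-algebra to `End_{Z_2}(M(Z_2^n, Z_2))`, sending `x_i` to multiplication by
the `i`-th coordinate and `y_i` to the Boolean derivative `∂_i`. -/
theorem boole_weyl_iso_end (n : ℕ) :
    ∃ e : RingQuot (BWRel n) ≃ₐ[ZMod 2] Module.End (ZMod 2) (V n),
      (∀ i, e (RingQuot.mkAlgHom (ZMod 2) (BWRel n) (xg n i)) = XOp i) ∧
      (∀ i, e (RingQuot.mkAlgHom (ZMod 2) (BWRel n) (yg n i)) = derivOp i) := by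
  refine ⟨AlgEquiv.ofBijective (phi n) ⟨phi_injective n, phi_surjective n⟩,
    fun i => ?_, fun i => ?_⟩
  · exact phi_x i
  · exact phi_y i
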